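/- For any sequence (r_n) of positive reals decreasing to 0, there exists an irrational number θ_0 such that e^{2πinθ_0} ≠ 1 for all n ∈ N, and there is a sequence n_j → ∞ with 0 < |e^{2πi n_j θ_0} − 1| < r_{n_j} for all j. In particular, one may take r_n = exp(−(n−1)2^n) to obtain θ_0 irrational with |e^{2πi n_j θ_0} − 1| < exp(−(n_j − 1) 2^{n_j}) along a sequence n_j → ∞. -/

import Mathlib

open Filter Topology

private lemma irr_exp_ne_one {θ0 : ℝ} (hirr : Irrational θ0) :
    ∀ n : ℕ, 0 < n →
      Complex.exp (2 * Real.pi * (n : ℂ) * (θ0 : ℂ) * Complex.I) ≠ 1 := by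
  intro n hn h
  rw [Complex.exp_eq_one_iff] at h
  obtain ⟨k, hk⟩ := h
  have h1 : ((2 * Real.pi * n * θ0 : ℝ) : ℂ) * Complex.I
      = ((2 * Real.pi * k : ℝ) : ℂ) * Complex.I := by
    push_cast
    push_cast at hk
    rw [hk]; ring
  have h2 : (2 * Real.pi * n * θ0 : ℝ) = 2 * Real.pi * k := by
    have := mul_right_cancel₀ Complex.I_ne_zero h1
    exact_mod_cast this
  have hpi : (2 * Real.pi) ≠ 0 := by positivity
  have h3 : (n : ℝ) * θ0 = k := by
    field_simp at h2
    nlinarith [Real.pi_pos]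
  have h4 : θ0 = (k : ℝ) / (n : ℝ) := by
    field_simp at h3 ⊢
    linarith [h3]
  have : θ0 = ((k / n : ℚ) : ℝ) := by rw [h4]; push_cast; ring
  exact (this ▸ hirr) ⟨(k / n : ℚ), rfl⟩

private lemma exists_next (r : ℕ → ℝ) (hr : ∀ n, 0 < r n) (j m : ℕ) :
    ∃ M : ℕ, m + 4 ≤ M ∧ (j + 2) * m + 2 ≤ M ∧
      4 * Real.pi * 2 ^ (m + 1) < r (2 ^ m) * 2 ^ M := by
  obtain ⟨M0, hM0⟩ := pow_unbounded_of_one_lt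
    (4 * Real.pi * 2 ^ (m + 1) / r (2 ^ m)) (one_lt_two (α := ℝ))
  refine ⟨max M0 (max (m + 4) ((j + 2) * m + 2)),
    le_trans (le_max_left _ _) (le_max_right _ _),
    le_trans (le_max_right _ _) (le_max_right _ _), ?_⟩
  rw [div_lt_iff₀ (hr _)] at hM0
  have h2 : (2 : ℝ) ^ M0 ≤ 2 ^ max M0 (max (m + 4) ((j + 2) * m + 2)) :=
    pow_le_pow_right₀ one_le_two (le_max_left _ _)
  calc 4 * Real.pi * 2 ^ (m + 1) < 2 ^ M0 * r (2 ^ m) := hM0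
    _ ≤ 2 ^ max M0 (max (m + 4) ((j + 2) * m + 2)) * r (2 ^ m) := by
        apply mul_le_mul_of_nonneg_right h2 (hr _).le
    _ = r (2 ^ m) * 2 ^ max M0 (max (m + 4) ((j + 2) * m + 2)) := by ring

private lemma key_main (r : ℕ → ℝ) (hr : ∀ n, 0 < r n) :
    ∃ θ0 : ℝ, Irrational θ0 ∧ ∃ nj : ℕ → ℕ, StrictMono nj ∧ ∀ j : ℕ,
      0 < ‖
          (Complex.exp (2 * Real.pi * ((nj j : ℕ) : ℂ) * (θ0 : ℂ) * Complex.I) - 1)‖ ∧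
      ‖
          (Complex.exp (2 * Real.pi * ((nj j : ℕ) : ℂ) * (θ0 : ℂ) * Complex.I) - 1)‖
        < r (nj j) := by
  choose F hF1 hF2 hF3 using exists_next r hr
  set A : ℕ → ℕ := fun n => Nat.rec 1 (fun j m => F j m) n with hAdef
  have hA0 : A 0 = 1 := rfl
  have hAs : ∀ j, A (j + 1) = F j (A j) := fun j => rfl
  have hmono : StrictMono A := by
    apply strictMono_nat_of_lt_succ
    intro n
    rw [hAs]
    have := hF1 n (A n)
    omega
  have hA1 : ∀ j, 1 ≤ A j := fun j => hA0 ▸ hmono.monotone (Nat.zero_le j)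
  have hstep : ∀ m i, A m + i ≤ A (m + i) := by
    intro m i
    induction i with
    | zero => simp
    | succ i ih =>
      have h1 : A (m + i) < A (m + i + 1) := hmono (Nat.lt_succ_self _)
      have h2 : A (m + (i + 1)) = A (m + i + 1) := by rw [Nat.add_assoc]
      omega
  -- the series
  set f : ℕ → ℝ := fun k => (1 / 2 : ℝ) ^ (A k) with hfdef
  have hfpos : ∀ k, 0 < f k := fun k => by positivity
  have hsum : Summable f := by
    apply Summable.of_nonneg_of_le (fun k => (hfpos k).le)
      (fun k => ?_) summable_geometric_two
    exact pow_le_pow_of_le_one (by norm_num) (by norm_num) (hmono.le_apply)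
  set θ0 : ℝ := ∑' k, f k with hθdef
  -- tails
  set T : ℕ → ℝ := fun j => ∑' i, f (i + (j + 1)) with hTdef
  have hsplit : ∀ j, (∑ k ∈ Finset.range (j + 1), f k) + T j = θ0 :=
    fun j => Summable.sum_add_tsum_nat_add (j + 1) hsum
  have hsumT : ∀ j, Summable (fun i => f (i + (j + 1))) := fun j =>
    (summable_nat_add_iff (j + 1)).2 hsum
  have hTpos : ∀ j, 0 < T j := by
    intro j
    have := Summable.le_tsum (hsumT j) 0 (fun i _ => (hfpos (i + (j + 1))).le)
    exact lt_of_lt_of_le (hfpos (0 + (j + 1))) this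
  have hTle : ∀ j, T j ≤ 2 * (1 / 2 : ℝ) ^ (A (j + 1)) := by
    intro j
    have hg : Summable (fun i : ℕ => (1 / 2 : ℝ) ^ (A (j + 1)) * (1 / 2 : ℝ) ^ i) :=
      (summable_geometric_two).mul_left _
    have hle : ∀ i : ℕ, f (i + (j + 1)) ≤ (1 / 2 : ℝ) ^ (A (j + 1)) * (1 / 2 : ℝ) ^ i := by
      intro i
      rw [← pow_add]
      apply pow_le_pow_of_le_one (by norm_num) (by norm_num)
      have h1 := hstep (j + 1) i
      have h2 : A (i + (j + 1)) = A (j + 1 + i) := by rw [Nat.add_comm]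
      omega
    calc T j ≤ ∑' i : ℕ, (1 / 2 : ℝ) ^ (A (j + 1)) * (1 / 2 : ℝ) ^ i :=
          Summable.tsum_le_tsum hle (hsumT j) hg
      _ = (1 / 2 : ℝ) ^ (A (j + 1)) * 2 := by
          rw [tsum_mul_left, tsum_geometric_two]
      _ = 2 * (1 / 2 : ℝ) ^ (A (j + 1)) := by ring
  -- partial sums are rationals with denominator 2^(A j)
  set p : ℕ → ℕ := fun j => ∑ k ∈ Finset.range (j + 1), 2 ^ (A j - A k) with hpdef
  have hpS : ∀ j, (p j : ℝ) = 2 ^ (A j) * ∑ k ∈ Finset.range (j + 1), f k := by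
    intro j
    rw [hpdef]
    push_cast
    rw [Finset.mul_sum]
    apply Finset.sum_congr rfl
    intro k hk
    have hkj : A k ≤ A j := hmono.monotone (by
      have := Finset.mem_range.1 hk; omega)
    show (2 : ℝ) ^ (A j - A k) = 2 ^ (A j) * (1 / 2 : ℝ) ^ (A k)
    rw [pow_sub₀ (2 : ℝ) (by norm_num) hkj, div_pow, one_pow]
    ring
  have hθeq : ∀ j, θ0 = (p j : ℝ) / 2 ^ (A j) + T j := by
    intro j
    rw [← hsplit j, hpS j]
    field_simp
  -- Liouville, hence irrational
  have hliou : Liouville θ0 := by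
    intro n
    refine ⟨(p n : ℤ), (2 ^ (A n) : ℤ), ?_, ?_, ?_⟩
    · exact one_lt_pow₀ (by norm_num) (by have := hA1 n; omega)
    · intro h
      have : θ0 - (p n : ℝ) / 2 ^ (A n) = 0 := by
        rw [h]; push_cast; ring
      rw [hθeq n] at this
      have := hTpos n
      push_cast at *
      linarith
    · have hsub : θ0 - ((p n : ℤ) : ℝ) / ((2 ^ (A n) : ℤ) : ℝ) = T n := by
        rw [hθeq n]; push_cast; ring
      rw [hsub, abs_of_pos (hTpos n)]
      have h1 : T n ≤ 2 * (1 / 2 : ℝ) ^ (A (n + 1)) := hTle n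
      have h2 : n * A n + 2 ≤ A (n + 1) := by
        have := hF2 n (A n)
        rw [hAs]
        nlinarith [hA1 n]
      have h3 : (2 : ℝ) * (1 / 2 : ℝ) ^ (A (n + 1)) ≤ 2 * (1 / 2 : ℝ) ^ (n * A n + 2) := by
        apply mul_le_mul_of_nonneg_left _ (by norm_num)
        apply pow_le_pow_of_le_one (by norm_num) (by norm_num) h2
      have h4 : (2 : ℝ) * (1 / 2 : ℝ) ^ (n * A n + 2) < (1 / 2 : ℝ) ^ (n * A n) := by
        rw [pow_add]
        have : (0 : ℝ) < (1 / 2 : ℝ) ^ (n * A n) := by positivity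
        nlinarith
    
      have h5 : ((1 : ℝ) / 2) ^ (n * A n) = 1 / ((2 ^ (A n) : ℤ) : ℝ) ^ n := by
        push_cast
        rw [div_pow, one_pow, ← pow_mul]
        ring_nf
      linarith [h5 ▸ lt_of_le_of_lt (le_trans h1 h3) h4]
  have hirr : Irrational θ0 := hliou.irrational
  -- the subsequence
  refine ⟨θ0, hirr, fun j => 2 ^ (A j), ?_, ?_⟩
  · apply strictMono_nat_of_lt_succ
    intro n
    exact Nat.pow_lt_pow_right one_lt_two (hmono (Nat.lt_succ_self n))
  · intro j
    -- rewrite the exponential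
    set x : ℝ := 2 * Real.pi * 2 ^ (A j) * T j with hxdef
    have hxpos : 0 < x := by
      have := hTpos j
      have := Real.pi_pos
      positivity
  
    have hexp : Complex.exp (2 * Real.pi * ((2 ^ (A j) : ℕ) : ℂ) * (θ0 : ℂ) * Complex.I)
        = Complex.exp ((x : ℝ) * Complex.I) := by
      have hre : (2 : ℝ) ^ (A j) * θ0 = (p j : ℝ) + 2 ^ (A j) * T j := by
        rw [hθeq j]; field_simp; try ring
      have hrc := congrArg (fun t : ℝ => (t : ℂ)) hre
      push_cast at hrc
      have hxc : ((x : ℝ) : ℂ) = 2 * (Real.pi : ℂ) * 2 ^ (A j) * ((T j : ℝ) : ℂ) := by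
        rw [hxdef]; push_cast; ring
      have key : 2 * (Real.pi : ℂ) * ((2 ^ (A j) : ℕ) : ℂ) * (θ0 : ℂ) * Complex.I
          = ((p j : ℕ) : ℂ) * (2 * (Real.pi : ℂ) * Complex.I) + ((x : ℝ) : ℂ) * Complex.I := by
        push_cast
        rw [show (2 : ℂ) * Real.pi * 2 ^ (A j) * (θ0 : ℂ) * Complex.I
          = 2 * Real.pi * ((2 : ℂ) ^ (A j) * (θ0 : ℂ)) * Complex.I by ring, hrc, hxc]
        push_cast
        ring
      rw [key, Complex.exp_add]
      have := Complex.exp_int_mul_two_pi_mul_I (p j : ℤ)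
      push_cast at this
      rw [this, one_mul]
    rw [hexp]
    -- bounds on x
    have hAle : A j + 4 ≤ A (j + 1) := by rw [hAs]; exact hF1 j (A j)
    have hxT : x ≤ 2 * Real.pi * 2 ^ (A j) * (2 * (1 / 2 : ℝ) ^ (A (j + 1))) := by
      have hc : (0 : ℝ) < 2 * Real.pi * 2 ^ (A j) := by
        have := Real.pi_pos; positivity
      exact mul_le_mul_of_nonneg_left (hTle j) hc.le
    have hpow : (2 : ℝ) ^ (A j) * (2 * (1 / 2 : ℝ) ^ (A (j + 1)))
        = 2 ^ (A j + 1) / 2 ^ (A (j + 1)) := by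
      rw [div_pow, one_pow, pow_add]
      field_simp
      try ring
    have hxsmall : x ≤ Real.pi / 4 := by
      have h8 : (2 : ℝ) ^ (A j + 1) / 2 ^ (A (j + 1)) ≤ 1 / 8 := by
        rw [div_le_div_iff₀ (by positivity) (by norm_num)]
        have : (2 : ℝ) ^ (A j + 1) * 8 = 2 ^ (A j + 4) := by
          rw [pow_add, pow_add]; ring
        rw [this, one_mul]
        exact pow_le_pow_right₀ (by norm_num : (1:ℝ) ≤ 2) hAle
      calc x ≤ 2 * Real.pi * 2 ^ (A j) * (2 * (1 / 2 : ℝ) ^ (A (j + 1))) := hxT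
        _ = 2 * Real.pi * (2 ^ (A j + 1) / 2 ^ (A (j + 1))) := by rw [mul_assoc, hpow]
        _ ≤ 2 * Real.pi * (1 / 8) := by
            apply mul_le_mul_of_nonneg_left h8 (by positivity)
        _ = Real.pi / 4 := by ring
    have hx1 : x ≤ 1 := le_trans hxsmall (by nlinarith [Real.pi_le_four])
    constructor
    · -- positivity: exp(xI) ≠ 1 since 0 < x < 2π
      rw [norm_pos_iff, sub_ne_zero]
      intro h
      rw [Complex.exp_eq_one_iff] at h
      obtain ⟨k, hk⟩ := h
      have h2 : ((x : ℝ) : ℂ) * Complex.I = ((2 * Real.pi * k : ℝ) : ℂ) * Complex.I := by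
        rw [hk]; push_cast; ring
      have h3 : x = 2 * Real.pi * k := by
        have := mul_right_cancel₀ Complex.I_ne_zero h2
        exact_mod_cast this
      have hπ := Real.pi_pos
      have hk0 : (0 : ℝ) < k := by nlinarith
      have hk1 : (k : ℝ) < 1 := by nlinarith
      have : (1 : ℤ) ≤ k := by exact_mod_cast hk0
      have : (1 : ℝ) ≤ (k : ℝ) := by exact_mod_cast this
      linarith
    · -- upper bound
      have habs : ‖((x : ℝ) : ℂ) * Complex.I‖ = x := by
        rw [norm_mul, Complex.norm_I, Complex.norm_real, Real.norm_eq_abs, abs_of_pos hxpos, mul_one]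
      have hb := Complex.norm_exp_sub_one_le (x := ((x : ℝ) : ℂ) * Complex.I)
        (le_trans (le_of_eq habs) hx1)
      rw [habs] at hb
      have hfin : 2 * x < r (2 ^ (A j)) := by
        have h3 := hF3 j (A j)
        rw [← hAs] at h3
        have : 2 * x ≤ 4 * Real.pi * (2 ^ (A j + 1) / 2 ^ (A (j + 1))) := by
          calc 2 * x ≤ 2 * (2 * Real.pi * 2 ^ (A j) * (2 * (1 / 2 : ℝ) ^ (A (j + 1)))) := by
                linarith
            _ = 4 * Real.pi * (2 ^ (A j) * (2 * (1 / 2 : ℝ) ^ (A (j + 1)))) := by ring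
            _ = 4 * Real.pi * (2 ^ (A j + 1) / 2 ^ (A (j + 1))) := by rw [hpow]
        have h4 : 4 * Real.pi * (2 ^ (A j + 1) / 2 ^ (A (j + 1))) < r (2 ^ (A j)) := by
          rw [mul_div_assoc'] at *
          rw [div_lt_iff₀ (by positivity)]
          linarith [h3]
        linarith
      linarith

/-- For any sequence `(r_n)` of positive reals decreasing to `0` there is an
irrational `θ₀` with `e^{2πinθ₀} ≠ 1` for all `n ≥ 1` and a sequence `n_j → ∞` with
`0 < |e^{2πi n_j θ₀} − 1| < r_{n_j}`.  In particular one may take `r_n = exp(−(n−1)2^n)`. -/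
theorem degenerating_escape_rate_stmt5 :
    (∀ r : ℕ → ℝ, (∀ n, 0 < r n) → Antitone r → Tendsto r atTop (𝓝 0) →
      ∃ θ0 : ℝ, Irrational θ0 ∧
        (∀ n : ℕ, 0 < n →
          Complex.exp (2 * Real.pi * (n : ℂ) * (θ0 : ℂ) * Complex.I) ≠ 1) ∧
        ∃ nj : ℕ → ℕ, StrictMono nj ∧ ∀ j : ℕ,
          0 < ‖
              (Complex.exp (2 * Real.pi * ((nj j : ℕ) : ℂ) * (θ0 : ℂ) * Complex.I) - 1)‖ ∧
          ‖
              (Complex.exp (2 * Real.pi * ((nj j : ℕ) : ℂ) * (θ0 : ℂ) * Complex.I) - 1)‖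
            < r (nj j)) ∧
    (∃ θ0 : ℝ, Irrational θ0 ∧
      ∃ nj : ℕ → ℕ, StrictMono nj ∧ ∀ j : ℕ,
        0 < ‖
            (Complex.exp (2 * Real.pi * ((nj j : ℕ) : ℂ) * (θ0 : ℂ) * Complex.I) - 1)‖ ∧
        ‖
            (Complex.exp (2 * Real.pi * ((nj j : ℕ) : ℂ) * (θ0 : ℂ) * Complex.I) - 1)‖
          < Real.exp (-(((nj j : ℕ) : ℝ) - 1) * 2 ^ (nj j))) := by
  constructor
  · intro r hr _ _
    obtain ⟨θ0, hirr, nj, hnj, hj⟩ := key_main r hr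
    exact ⟨θ0, hirr, irr_exp_ne_one hirr, nj, hnj, hj⟩
  · obtain ⟨θ0, hirr, nj, hnj, hj⟩ := key_main
      (fun n => Real.exp (-((n : ℝ) - 1) * 2 ^ n)) (fun n => Real.exp_pos _)
    exact ⟨θ0, hirr, nj, hnj, hj⟩
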